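/- (Properties of the water transfer operator.) Let k ≥ 1, let r ∈ [k] and let 𝒫 : [k] \ {r} → [k] be a parent map whose directed graph (with an edge from a to 𝒫(a) for each a ≠ r) is a directed tree with root r, and let L̄ : [k] → ℝ satisfy L̄(𝒫(a)) ≤ L̄(a) for every a ≠ r. Then for every probability vector P ∈ Δ^{k−1} there exists a probability vector Q ∈ Δ^{k−1} such that: (1) ∑_{a=1}^k Q_a L̄(a) ≤ ∑_{a=1}^k P_a L̄(a); (2) Q_a ≤ Q_{𝒫(a)} for every a ≠ r; and (3) Q_a ≥ P_a / k for every a ∈ [k]. -/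

import Mathlib

open scoped BigOperators

/-- **Properties of the water transfer operator.**  Given a parent map `par` on `[k]`
whose directed graph (with an edge from each `a ≠ r` to its parent) is a directed tree
with root `r`, and a loss function that does not increase along parent edges, every
probability vector `P` can be transformed into a probability vector `Q` that (1) has no
larger expected loss, (2) is monotone along parent edges, and (3) pointwise loses at
most a factor `k`. -/
theorem water_transfer_properties (k : ℕ) (hk : 1 ≤ k) (r : Fin k)
    (par : Fin k → Fin k)
    (htree : ∀ a : Fin k, ∃ m : ℕ, par^[m] a = r)
    (Lbar : Fin k → ℝ) (hL : ∀ a : Fin k, a ≠ r → Lbar (par a) ≤ Lbar a)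
    (P : Fin k → ℝ) (hP : P ∈ stdSimplex ℝ (Fin k)) :
    ∃ Q ∈ stdSimplex ℝ (Fin k),
      (∑ a : Fin k, Q a * Lbar a ≤ ∑ a : Fin k, P a * Lbar a) ∧
      (∀ a : Fin k, a ≠ r → Q a ≤ Q (par a)) ∧
      (∀ a : Fin k, P a / k ≤ Q a) := by
  have hk0 : (0:ℝ) < k := by exact_mod_cast hk
  obtain ⟨hP0, hP1⟩ := hP
  -- distance to the root
  set d : Fin k → ℕ := fun b => Nat.find (htree b) with hd_def
  have hd : ∀ b, par^[d b] b = r := fun b => Nat.find_spec (htree b)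
  have hdmin : ∀ b, ∀ m, m < d b → par^[m] b ≠ r := fun b m hm => Nat.find_min (htree b) hm
  -- the set of ancestors of a vertex (including itself)
  set anc : Fin k → Finset (Fin k) :=
    fun b => (Finset.range (d b + 1)).image (fun m => par^[m] b) with hanc_def
  have mem_anc : ∀ a b : Fin k, a ∈ anc b ↔ ∃ m, m ≤ d b ∧ par^[m] b = a := by
    intro a b
    simp [hanc_def, Nat.lt_succ_iff, eq_comm]
  have self_mem : ∀ a, a ∈ anc a := fun a => (mem_anc a a).2 ⟨0, Nat.zero_le _, rfl⟩
  have r_mem : ∀ b, r ∈ anc b := fun b => (mem_anc r b).2 ⟨d b, le_rfl, hd b⟩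
  have par_mem : ∀ a b : Fin k, a ≠ r → a ∈ anc b → par a ∈ anc b := by
    intro a b ha hab
    obtain ⟨m, hm, hme⟩ := (mem_anc a b).1 hab
    have hmlt : m < d b := by
      rcases lt_or_eq_of_le hm with h | h
      · exact h
      · exact absurd (by rw [← hme, h]; exact hd b) ha
    exact (mem_anc _ _).2 ⟨m + 1, hmlt, by rw [Function.iterate_succ_apply', hme]⟩
  -- losses along ancestors are smaller
  have L_iter : ∀ b : Fin k, ∀ m, m ≤ d b → Lbar (par^[m] b) ≤ Lbar b := by
    intro b m
    induction m with
    | zero => intro _; simp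
    | succ n ih =>
      intro h
      have hn : n < d b := Nat.lt_of_succ_le h
      have h1 : Lbar (par^[n] b) ≤ Lbar b := ih hn.le
      have h2 : Lbar (par (par^[n] b)) ≤ Lbar (par^[n] b) := hL _ (hdmin b n hn)
      rw [Function.iterate_succ_apply']
      exact h2.trans h1
  have L_anc : ∀ a b : Fin k, a ∈ anc b → Lbar a ≤ Lbar b := by
    intro a b hab
    obtain ⟨m, hm, hme⟩ := (mem_anc a b).1 hab
    exact hme ▸ L_iter b m hm
  have card_le : ∀ b, ((anc b).card : ℝ) ≤ k := by
    intro b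
    have h := Finset.card_le_card (Finset.subset_univ (anc b))
    have : (anc b).card ≤ k := by simpa using h
    exact_mod_cast this
  have card_div_le : ∀ b, ((anc b).card : ℝ) / k ≤ 1 := fun b =>
    (div_le_one hk0).2 (card_le b)
  -- the transfer weights
  set w : Fin k → Fin k → ℝ :=
    fun b a => (if a ∈ anc b then 1 / (k:ℝ) else 0) +
      (if a = r then 1 - ((anc b).card : ℝ) / k else 0) with hw_def
  have w_nonneg : ∀ b a, 0 ≤ w b a := by
    intro b a
    apply add_nonneg
    · positivity
    · split
      · linarith [card_div_le b]
      · exact le_rfl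
  have sum_w : ∀ b, ∑ a : Fin k, w b a = 1 := by
    intro b
    rw [hw_def]
    rw [Finset.sum_add_distrib]
    rw [Finset.sum_ite_eq' Finset.univ r (fun _ => 1 - ((anc b).card : ℝ) / k)]
    rw [Finset.sum_ite_mem, Finset.univ_inter, Finset.sum_const, nsmul_eq_mul]
    simp only [Finset.mem_univ, if_true]
    field_simp
    ring
  have sum_wL : ∀ b, ∑ a : Fin k, w b a * Lbar a ≤ Lbar b := by
    intro b
    have key : ∑ a : Fin k, w b a * Lbar a =
        (∑ a ∈ anc b, (1 / (k:ℝ)) * Lbar a) + (1 - ((anc b).card : ℝ) / k) * Lbar r := by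
      rw [hw_def]
      simp only [add_mul, ite_mul, zero_mul]
      rw [Finset.sum_add_distrib]
      rw [Finset.sum_ite_eq' Finset.univ r (fun a => (1 - ((anc b).card : ℝ) / k) * Lbar a)]
      rw [Finset.sum_ite_mem, Finset.univ_inter]
      simp
    rw [key]
    have h1 : ∑ a ∈ anc b, (1 / (k:ℝ)) * Lbar a ≤ ((anc b).card : ℝ) / k * Lbar b := by
      have : ∑ a ∈ anc b, (1 / (k:ℝ)) * Lbar a ≤ ∑ a ∈ anc b, (1 / (k:ℝ)) * Lbar b := by
        apply Finset.sum_le_sum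
        intro a ha
        have := L_anc a b ha
        have hpos : (0:ℝ) ≤ 1 / (k:ℝ) := by positivity
        exact mul_le_mul_of_nonneg_left this hpos
      calc ∑ a ∈ anc b, (1 / (k:ℝ)) * Lbar a ≤ ∑ a ∈ anc b, (1 / (k:ℝ)) * Lbar b := this
        _ = ((anc b).card : ℝ) / k * Lbar b := by
            rw [Finset.sum_const, nsmul_eq_mul]; ring
    have h2 : (1 - ((anc b).card : ℝ) / k) * Lbar r ≤
        (1 - ((anc b).card : ℝ) / k) * Lbar b := by
      apply mul_le_mul_of_nonneg_left (L_anc r b (r_mem b))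
      linarith [card_div_le b]
    calc (∑ a ∈ anc b, (1 / (k:ℝ)) * Lbar a) + (1 - ((anc b).card : ℝ) / k) * Lbar r
        ≤ ((anc b).card : ℝ) / k * Lbar b + (1 - ((anc b).card : ℝ) / k) * Lbar b := by
          exact add_le_add h1 h2
      _ = Lbar b := by ring
  -- the new probability vector
  refine ⟨fun a => ∑ b : Fin k, P b * w b a, ⟨?_, ?_⟩, ?_, ?_, ?_⟩
  · intro a
    exact Finset.sum_nonneg fun b _ => mul_nonneg (hP0 b) (w_nonneg b a)
  · rw [Finset.sum_comm]
    calc ∑ b : Fin k, ∑ a : Fin k, P b * w b a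
        = ∑ b : Fin k, P b * ∑ a : Fin k, w b a := by
          simp [Finset.mul_sum]
      _ = ∑ b : Fin k, P b := by simp [sum_w]
      _ = 1 := hP1
  · calc ∑ a : Fin k, (∑ b : Fin k, P b * w b a) * Lbar a
        = ∑ b : Fin k, P b * ∑ a : Fin k, w b a * Lbar a := by
          simp only [Finset.sum_mul]
          rw [Finset.sum_comm]
          congr 1
          ext b
          rw [Finset.mul_sum]
          congr 1
          ext a
          ring
      _ ≤ ∑ b : Fin k, P b * Lbar b := by
          apply Finset.sum_le_sum
          intro b _
          exact mul_le_mul_of_nonneg_left (sum_wL b) (hP0 b)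
  · intro a ha
    apply Finset.sum_le_sum
    intro b _
    apply mul_le_mul_of_nonneg_left _ (hP0 b)
    rw [hw_def]
    simp only [if_neg ha]
    apply add_le_add
    · split
      · next h => rw [if_pos (par_mem a b ha h)]
      · split
        · positivity
        · exact le_rfl
    · split
      · linarith [card_div_le b]
      · exact le_rfl
  · intro a
    have hsingle : P a * w a a ≤ ∑ b : Fin k, P b * w b a :=
      Finset.single_le_sum (fun b _ => mul_nonneg (hP0 b) (w_nonneg b a))
        (Finset.mem_univ a)
    have hw : 1 / (k:ℝ) ≤ w a a := by
      rw [hw_def]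
      simp only [if_pos (self_mem a)]
      have : (0:ℝ) ≤ if a = r then 1 - ((anc a).card : ℝ) / k else 0 := by
        split
        · linarith [card_div_le a]
        · exact le_rfl
      linarith
    calc P a / k = P a * (1 / k) := by ring
      _ ≤ P a * w a a := mul_le_mul_of_nonneg_left hw (hP0 a)
      _ ≤ _ := hsingle
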